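/- Let G = (V, E) be a finite directed acyclic graph with vertex set V = {v₁, …, vₙ}. Then G is completely serial if and only if the cardinality of [v]_⊥ equals 1 for every vertex v ∈ V. -/

import Mathlib

/-- Reachability: there is a nonempty directed path from `u` to `v`. -/
def Reach {V : Type*} (E : V → V → Prop) : V → V → Prop := Relation.TransGen E

/-- Two vertices are independent if neither reaches the other. -/
def Indep {V : Type*} (E : V → V → Prop) (u v : V) : Prop :=
  ¬ Reach E u v ∧ ¬ Reach E v u

/-- `[v]_⊥ = {u : u ⊥ v} ∪ {v}`. -/
def PerpClass {V : Type*} (E : V → V → Prop) (v : V) : Set V :=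
  {u | Indep E u v} ∪ {v}

/-- A set of vertices is independent if its elements are pairwise independent. -/
def IndepSet {V : Type*} (E : V → V → Prop) (I : Set V) : Prop :=
  ∀ u ∈ I, ∀ v ∈ I, u ≠ v → Indep E u v

/-- A finite DAG is completely serial if there is an enumeration `x₁, …, xₙ` of all
vertices with an edge from each `x_k` to `x_{k+1}` (a Hamiltonian directed path). -/
def CompletelySerial {V : Type*} [Fintype V] (E : V → V → Prop) : Prop :=
  ∃ e : Fin (Fintype.card V) ≃ V, ∀ k : ℕ, ∀ h : k + 1 < Fintype.card V,
    E (e ⟨k, Nat.lt_of_succ_lt h⟩) (e ⟨k + 1, h⟩)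

/-- a finite DAG is completely serial iff `|[v]_⊥| = 1` for every vertex. -/
theorem stmt_2 {V : Type*} [Fintype V] (E : V → V → Prop)
    (hdag : ∀ v : V, ¬ Reach E v v) :
    CompletelySerial E ↔ ∀ v : V, (PerpClass E v).ncard = 1 := by
  classical
  constructor
  · rintro ⟨e, he⟩ v
    have hreach : ∀ i j : Fin (Fintype.card V), i < j → Reach E (e i) (e j) := by
      rintro i ⟨j, hj⟩
      induction j with
      | zero => intro h; exact absurd h (by simp [Fin.lt_def])
      | succ m ih =>
        intro hij
        have hm : m < Fintype.card V := Nat.lt_of_succ_lt hj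
        have hedge : E (e ⟨m, hm⟩) (e ⟨m + 1, hj⟩) := he m hj
        rcases Nat.lt_succ_iff_lt_or_eq.mp hij with h | h
        · exact (ih hm h).tail hedge
        · have : i = ⟨m, hm⟩ := Fin.ext h
          rw [this]; exact Relation.TransGen.single hedge
    have hcomp : ∀ u : V, u ≠ v → Reach E u v ∨ Reach E v u := by
      intro u huv
      have hij : e.symm u ≠ e.symm v := fun h => huv (e.symm.injective h)
      rcases lt_or_gt_of_ne hij with h | h
      · left; have := hreach _ _ h; simpa using this
      · right; have := hreach _ _ h; simpa using this
    have hss : PerpClass E v = {v} := by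
      apply Set.eq_singleton_iff_unique_mem.mpr
      refine ⟨Or.inr rfl, ?_⟩
      rintro u (hu | hu)
      · by_contra hne
        rcases hcomp u hne with h | h
        · exact hu.1 h
        · exact hu.2 h
      · exact hu
    rw [hss, Set.ncard_singleton]
  · intro h
    have hcomp : ∀ u v : V, u ≠ v → Reach E u v ∨ Reach E v u := by
      intro u v huv
      by_contra hc
      push_neg at hc
      have hu : u ∈ PerpClass E v := Or.inl ⟨hc.1, hc.2⟩
      obtain ⟨a, ha⟩ := Set.ncard_eq_one.mp (h v)
      have hv : v ∈ PerpClass E v := Or.inr rfl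
      rw [ha] at hu hv
      exact huv (hu.trans hv.symm)
    haveI : IsTrans V (Reach E) := ⟨fun _ _ _ => Relation.TransGen.trans⟩
    haveI : IsIrrefl V (Reach E) := ⟨hdag⟩
    haveI : IsTrichotomous V (Reach E) := ⟨fun a b => by
      by_cases hab : a = b
      · exact fun _ _ => hab
      · rcases hcomp a b hab with h' | h'
        · exact fun h1 _ => absurd h' h1
        · exact fun _ h2 => absurd h' h2⟩
    haveI : IsStrictTotalOrder V (Reach E) := {}
    letI : LinearOrder V := linearOrderOfSTO (Reach E)
    have hlt : ∀ a b : V, a < b ↔ Reach E a b := fun a b => Iff.rfl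
    let iso := monoEquivOfFin V rfl
    refine ⟨iso.toEquiv, ?_⟩
    intro k hk
    set x := iso ⟨k, Nat.lt_of_succ_lt hk⟩ with hx
    set y := iso ⟨k + 1, hk⟩ with hy
    have hxy : Reach E x y := by
      rw [← hlt]
      exact iso.lt_iff_lt.mpr (by simp [Fin.lt_def])
    have hxy' : Relation.TransGen E x y := hxy
    rcases Relation.TransGen.head'_iff.mp hxy' with ⟨c, hxc, hcy⟩
    rcases Relation.reflTransGen_iff_eq_or_transGen.mp hcy with rfl | hcy
    · exact hxc
    · exfalso
      have hcy : Reach E c y := hcy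
      have h1 : x < c := (hlt _ _).mpr (Relation.TransGen.single hxc)
      have h2 : c < y := (hlt _ _).mpr hcy
      have i1 : iso.symm x < iso.symm c := iso.symm.lt_iff_lt.mpr h1
      have i2 : iso.symm c < iso.symm y := iso.symm.lt_iff_lt.mpr h2
      rw [hx, iso.symm_apply_apply] at i1
      rw [hy, iso.symm_apply_apply] at i2
      rw [Fin.lt_def] at i1 i2
      simp at i1 i2
      omega
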